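/- Define F : ℝ² → ℝ² by F(x) = x − Π_K(x − τ∇f(x)) with f(x) = ½(2x₁² − x₂²), τ = 1/2, and K = {x : x₁ ≥ |x₂|}. Then F(x) = (x₁ − (3/4)|x₂|, (1/4)x₂) for all x, the map F is bijective with inverse F^{-1}(y) = (y₁ + 3|y₂|, 4y₂), and F^{-1} is globally Lipschitz continuous. -/

import Mathlib

/-- The cone `K = {x ∈ ℝ² : x₁ ≥ |x₂|}`. -/
def iceCone : Set (EuclideanSpace ℝ (Fin 2)) := {x | |x 1| ≤ x 0}

/-- `proj` is the Euclidean projection map onto `K`. -/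
def IsProjMapK (proj : EuclideanSpace ℝ (Fin 2) → EuclideanSpace ℝ (Fin 2)) : Prop :=
  ∀ x, proj x ∈ iceCone ∧ ∀ y ∈ iceCone, dist x (proj x) ≤ dist x y



lemma key_real (a b t : ℝ) (hab : |b| ≤ a) (hsq : a ^ 2 + (t - b) ^ 2 ≤ t ^ 2 / 2) :
    b = t / 2 ∧ a = |t| / 2 := by
  have hb2 : b ^ 2 ≤ a ^ 2 := by nlinarith [abs_nonneg b, sq_abs b]
  have hbt : b = t / 2 := by nlinarith [sq_nonneg (b - t / 2)]
  refine ⟨hbt, ?_⟩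
  have h1 : |t| / 2 ≤ a := by
    calc |t| / 2 = |b| := by rw [hbt, abs_div]; simp
      _ ≤ a := hab
  have h2' : a ^ 2 ≤ t ^ 2 / 4 := by nlinarith
  nlinarith [abs_nonneg t, sq_abs t]

lemma proj_axis {proj : EuclideanSpace ℝ (Fin 2) → EuclideanSpace ℝ (Fin 2)}
    (hproj : IsProjMapK proj) (t : ℝ) :
    proj (WithLp.toLp 2 ![0, t] : EuclideanSpace ℝ (Fin 2)) = (WithLp.toLp 2 ![|t| / 2, t / 2] : EuclideanSpace ℝ (Fin 2)) := by
  set q : EuclideanSpace ℝ (Fin 2) := WithLp.toLp 2 ![0, t] with hq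
  set p : EuclideanSpace ℝ (Fin 2) := WithLp.toLp 2 ![|t| / 2, t / 2] with hp
  have hpK : p ∈ iceCone := by
    simp [iceCone, hp, abs_div]
  obtain ⟨hmem, hmin⟩ := hproj q
  have h2 := hmin p hpK
  set a : ℝ := proj q 0 with haa
  set b : ℝ := proj q 1 with hbb
  have hab : |b| ≤ a := hmem
  have hd1 : dist q (proj q) ^ 2 = a ^ 2 + (t - b) ^ 2 := by
    rw [EuclideanSpace.dist_eq, Real.sq_sqrt (by positivity)]
    simp [Fin.sum_univ_two, hq, Real.dist_eq, ← haa, ← hbb]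
    rfl
  have hd2 : dist q p ^ 2 = t ^ 2 / 2 := by
    rw [EuclideanSpace.dist_eq, Real.sq_sqrt (by positivity)]
    simp [Fin.sum_univ_two, hq, hp, Real.dist_eq, abs_div, sq_abs]
    nlinarith [sq_abs t]
  have hsq : dist q (proj q) ^ 2 ≤ dist q p ^ 2 :=
    pow_le_pow_left₀ dist_nonneg h2 2
  rw [hd1, hd2] at hsq
  obtain ⟨hbt, hat⟩ := key_real a b t hab hsq
  ext i
  fin_cases i
  · simpa [hp] using hat
  · simpa [hp] using hbt

/-- for `F(x) = x − Π_K(x − τ∇f(x))` with `f(x) = ½(2x₁² − x₂²)` and `τ = 1/2`,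
one has `F(x) = (x₁ − (3/4)|x₂|, (1/4)x₂)`, `F` is bijective with inverse
`y ↦ (y₁ + 3|y₂|, 4y₂)`, and the inverse is globally Lipschitz. -/
theorem stmt_10 (proj : EuclideanSpace ℝ (Fin 2) → EuclideanSpace ℝ (Fin 2))
    (hproj : IsProjMapK proj)
    (F : EuclideanSpace ℝ (Fin 2) → EuclideanSpace ℝ (Fin 2))
    (hF : ∀ x, F x = x - proj
      (WithLp.toLp 2 ![x 0 - (1 / 2) * (2 * x 0), x 1 - (1 / 2) * (-(x 1))] : EuclideanSpace ℝ (Fin 2))) :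
    (∀ x, F x = (WithLp.toLp 2 ![x 0 - (3 / 4) * |x 1|, (1 / 4) * x 1] : EuclideanSpace ℝ (Fin 2))) ∧
    Function.Bijective F ∧
    Function.LeftInverse
      (fun y : EuclideanSpace ℝ (Fin 2) =>
        (WithLp.toLp 2 ![y 0 + 3 * |y 1|, 4 * y 1] : EuclideanSpace ℝ (Fin 2))) F ∧
    Function.RightInverse
      (fun y : EuclideanSpace ℝ (Fin 2) =>
        (WithLp.toLp 2 ![y 0 + 3 * |y 1|, 4 * y 1] : EuclideanSpace ℝ (Fin 2))) F ∧
    ∃ L : NNReal, LipschitzWith L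
      (fun y : EuclideanSpace ℝ (Fin 2) =>
        (WithLp.toLp 2 ![y 0 + 3 * |y 1|, 4 * y 1] : EuclideanSpace ℝ (Fin 2))) := by
  have hFx : ∀ x : EuclideanSpace ℝ (Fin 2),
      F x = (WithLp.toLp 2 ![x 0 - (3 / 4) * |x 1|, (1 / 4) * x 1] : EuclideanSpace ℝ (Fin 2)) := by
    intro x
    have harg : (WithLp.toLp 2 ![x 0 - (1 / 2) * (2 * x 0), x 1 - (1 / 2) * (-(x 1))] :
        EuclideanSpace ℝ (Fin 2)) = (WithLp.toLp 2 ![0, (3 / 2) * x 1] : EuclideanSpace ℝ (Fin 2)) := by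
      ext i; fin_cases i <;> simp <;> ring
    rw [hF x, harg, proj_axis hproj]
    ext i
    fin_cases i
    · show x 0 - |3 / 2 * x 1| / 2 = x 0 - 3 / 4 * |x 1|
      rw [abs_mul, abs_of_nonneg (by norm_num : (0:ℝ) ≤ 3/2)]
      ring
    · show x 1 - 3 / 2 * x 1 / 2 = 1 / 4 * x 1
      ring
  set g : EuclideanSpace ℝ (Fin 2) → EuclideanSpace ℝ (Fin 2) :=
    fun y => (WithLp.toLp 2 ![y 0 + 3 * |y 1|, 4 * y 1] : EuclideanSpace ℝ (Fin 2)) with hg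
  have hleft : Function.LeftInverse g F := by
    intro x
    rw [hFx x]
    ext i
    fin_cases i
    · show x 0 - 3 / 4 * |x 1| + 3 * |1 / 4 * x 1| = x 0
      rw [abs_mul, abs_of_nonneg (by norm_num : (0:ℝ) ≤ 1/4)]
      ring
    · show 4 * (1 / 4 * x 1) = x 1
      ring
  have hright : Function.RightInverse g F := by
    intro y
    rw [hFx (g y)]
    ext i
    fin_cases i
    · show y 0 + 3 * |y 1| - 3 / 4 * |4 * y 1| = y 0
      rw [abs_mul, abs_of_nonneg (by norm_num : (0:ℝ) ≤ 4)]
      ring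
    · show 1 / 4 * (4 * y 1) = y 1
      ring
  have hcoord : ∀ (y z : EuclideanSpace ℝ (Fin 2)) (i : Fin 2),
      |y i - z i| ≤ dist y z := by
    intro y z i
    rw [EuclideanSpace.dist_eq]
    have h1 : (y i - z i) ^ 2 ≤ ∑ j, dist (y j) (z j) ^ 2 := by
      have : dist (y i) (z i) ^ 2 ≤ ∑ j, dist (y j) (z j) ^ 2 :=
        Finset.single_le_sum (f := fun j => dist (y j) (z j) ^ 2)
          (fun j _ => by positivity) (Finset.mem_univ i)
      rwa [Real.dist_eq, sq_abs] at this
    calc |y i - z i| = ((y i - z i) ^ 2).sqrt := (Real.sqrt_sq_eq_abs _).symm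
      _ ≤ _ := Real.sqrt_le_sqrt h1
  refine ⟨hFx, Function.bijective_iff_has_inverse.mpr ⟨g, hleft, hright⟩,
    hleft, hright, ⟨9, ?_⟩⟩
  apply LipschitzWith.of_dist_le_mul
  intro y z
  have hcomp : ∀ i : Fin 2, dist (g y i) (g z i) ≤ (6 : NNReal) * dist y z := by
   intro i
   fin_cases i
   · show dist (y 0 + 3 * |y 1|) (z 0 + 3 * |z 1|) ≤ _
     rw [Real.dist_eq]
     have h0 := hcoord y z 0
     have h1 := hcoord y z 1
     have habs : |(|y 1| - |z 1|)| ≤ |y 1 - z 1| := abs_abs_sub_abs_le_abs_sub _ _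
     calc |y 0 + 3 * |y 1| - (z 0 + 3 * |z 1|)|
         = |(y 0 - z 0) + 3 * (|y 1| - |z 1|)| := by ring_nf
       _ ≤ |y 0 - z 0| + |3 * (|y 1| - |z 1|)| := abs_add_le _ _
       _ = |y 0 - z 0| + 3 * |(|y 1| - |z 1|)| := by
           rw [abs_mul, abs_of_nonneg (by norm_num : (0:ℝ) ≤ 3)]
       _ ≤ dist y z + 3 * dist y z := by
           have : |(|y 1| - |z 1|)| ≤ dist y z := habs.trans h1
           linarith
       _ ≤ (6 : NNReal) * dist y z := by
           push_cast
           have := dist_nonneg (x := y) (y := z)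
           linarith
   · show dist (4 * y 1) (4 * z 1) ≤ _
     rw [Real.dist_eq]
     have h1 := hcoord y z 1
     calc |4 * y 1 - 4 * z 1| = 4 * |y 1 - z 1| := by
           rw [show (4:ℝ) * y 1 - 4 * z 1 = 4 * (y 1 - z 1) by ring, abs_mul,
             abs_of_nonneg (by norm_num : (0:ℝ) ≤ 4)]
       _ ≤ (6 : NNReal) * dist y z := by
           push_cast
           have := dist_nonneg (x := y) (y := z)
           linarith
  have c6 : ((6 : NNReal) : ℝ) = 6 := by norm_num
  have c9 : ((9 : NNReal) : ℝ) = 9 := by norm_num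
  have h0 := hcomp 0
  have h1 := hcomp 1
  rw [c6] at h0 h1
  rw [c9, EuclideanSpace.dist_eq, Fin.sum_univ_two, Real.sqrt_le_iff]
  have hd := dist_nonneg (x := y) (y := z)
  have e0 := pow_le_pow_left₀ dist_nonneg h0 2
  have e1 := pow_le_pow_left₀ dist_nonneg h1 2
  constructor
  · positivity
  · nlinarith
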